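/- Fix integers 2 ≤ m ≤ n. (a) For all integers z₁ ≠ z₂ with 1 ≤ z₁, z₂ ≤ n−1, there exist a partial order L, monotone functions s, t : L → L with s x ≤ t x for all x, s^[m] = s, t^[n] = t, and a point x ∈ L such that ¬(t^[z₁] x ≤ t^[z₂] x). (b) Likewise, for all integers z₁ ≠ z₂ with 1 ≤ z₁, z₂ ≤ m−1, there exist such L, s, t and a point x with ¬(s^[z₁] x ≤ s^[z₂] x). -/

import Mathlib

/-- `s, t` form a Chittenden setup of type `(m, n)`. -/
def ChittendenSetup (m n : ℕ) (L : Type) [PartialOrder L] (s t : L → L) : Prop :=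
  Monotone s ∧ Monotone t ∧ (∀ y, s y ≤ t y) ∧ s^[m] = s ∧ t^[n] = t

/-- A setup together with a point separating `t^[z₁]` from `t^[z₂]`. -/
def TSeparated (m n z₁ z₂ : ℕ) (L : Type) [PartialOrder L]
    (s t : L → L) (x : L) : Prop :=
  ChittendenSetup m n L s t ∧ ¬ t^[z₁] x ≤ t^[z₂] x

/-- A setup together with a point separating `s^[z₁]` from `s^[z₂]`. -/
def SSeparated (m n z₁ z₂ : ℕ) (L : Type) [PartialOrder L]
    (s t : L → L) (x : L) : Prop :=
  ChittendenSetup m n L s t ∧ ¬ s^[z₁] x ≤ s^[z₂] x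

/-- `ZMod k` with the discrete partial order. -/
def Disc (k : ℕ) : Type := ZMod k

instance (k : ℕ) : PartialOrder (Disc k) where
  le a b := a = b
  le_refl _ := rfl
  le_trans _ _ _ h h' := Eq.trans h h'
  le_antisymm _ _ h _ := h

lemma Disc.le_iff {k : ℕ} (a b : Disc k) : a ≤ b ↔ a = b := ⟨fun h => h, fun h => h⟩

/-- The successor map on `Disc k`. -/
def dstep (k : ℕ) (a : Disc k) : Disc k := (show ZMod k from a) + 1

lemma dstep_mono (k : ℕ) : Monotone (dstep k) := fun _ _ h => congrArg _ h

lemma dstep_iterate (k j : ℕ) (a : Disc k) :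
    (dstep k)^[j] a = (show ZMod k from (show ZMod k from a) + (j : ZMod k)) := by
  induction j with
  | zero => simp; exact (add_zero (show ZMod k from a)).symm
  | succ j ih =>
      rw [Function.iterate_succ_apply', ih]
      show (show ZMod k from _) + 1 = _
      push_cast
      exact add_assoc (show ZMod k from a) (j : ZMod k) 1

lemma cast_ne_of_interval (k z₁ z₂ : ℕ) (h : z₁ ≠ z₂) (h1 : 1 ≤ z₁) (h2 : z₁ ≤ k)
    (h3 : 1 ≤ z₂) (h4 : z₂ ≤ k) : ((z₁ : ZMod k) ≠ (z₂ : ZMod k)) := by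
  intro he
  rw [ZMod.natCast_eq_natCast_iff] at he
  rcases lt_or_gt_of_ne h with hlt | hgt
  · have hd := (Nat.modEq_iff_dvd' hlt.le).mp he
    have := Nat.le_of_dvd (by omega) hd
    omega
  · have hd := (Nat.modEq_iff_dvd' hgt.le).mp he.symm
    have := Nat.le_of_dvd (by omega) hd
    omega

lemma withBot_map_iterate {α : Type*} (f : α → α) (j : ℕ) (a : α) :
    (WithBot.map f)^[j] (a : WithBot α) = ((f^[j] a : α) : WithBot α) := by
  induction j with
  | zero => rfl
  | succ j ih => rw [Function.iterate_succ_apply', ih, WithBot.map_coe, Function.iterate_succ_apply']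

lemma withTop_map_iterate {α : Type*} (f : α → α) (j : ℕ) (a : α) :
    (WithTop.map f)^[j] (a : WithTop α) = ((f^[j] a : α) : WithTop α) := by
  induction j with
  | zero => rfl
  | succ j ih => rw [Function.iterate_succ_apply', ih, WithTop.map_coe, Function.iterate_succ_apply']

lemma cast_eq_one_mod (n : ℕ) (hn : 2 ≤ n) : ((n : ZMod (n - 1)) = 1) := by
  have h : n = (n - 1) + 1 := by omega
  rw [h]
  push_cast
  simp

/-- Distinct powers of `t` in `{1, …, n-1}` (resp. of `s` in `{1, …, m-1}`)
are incomparable in general: suitable posets and points witness this. -/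
theorem powers_incomparable (m n : ℕ) (hm : 2 ≤ m) (hmn : m ≤ n) :
    (∀ z₁ z₂ : ℕ, z₁ ≠ z₂ → 1 ≤ z₁ → z₁ ≤ n - 1 → 1 ≤ z₂ → z₂ ≤ n - 1 →
      ∃ (L : Type) (inst : PartialOrder L) (s t : L → L) (x : L),
        @TSeparated m n z₁ z₂ L inst s t x) ∧
    (∀ z₁ z₂ : ℕ, z₁ ≠ z₂ → 1 ≤ z₁ → z₁ ≤ m - 1 → 1 ≤ z₂ → z₂ ≤ m - 1 →
      ∃ (L : Type) (inst : PartialOrder L) (s t : L → L) (x : L),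
        @SSeparated m n z₁ z₂ L inst s t x) := by
  have hn : 2 ≤ n := hm.trans hmn
  constructor
  · intro z₁ z₂ hne h1 h2 h3 h4
    refine ⟨WithBot (Disc (n - 1)), inferInstance, fun _ => ⊥,
      WithBot.map (dstep (n - 1)),
      ((show Disc (n - 1) from (0 : ZMod (n - 1))) : WithBot (Disc (n - 1))), ?_, ?_⟩
    · refine ⟨monotone_const, (dstep_mono _).withBot_map, fun y => bot_le, ?_, ?_⟩
      · obtain ⟨m', rfl⟩ : ∃ m', m = m' + 1 := ⟨m - 1, by omega⟩
        funext x
        rw [Function.iterate_succ_apply]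
        exact Function.iterate_fixed rfl m'
      · funext x
        cases x with
        | bot =>
            show (WithBot.map (dstep (n - 1)))^[n] ⊥ = _
            rw [Function.iterate_fixed (by simp [WithBot.map_bot]) n]
            simp [WithBot.map_bot]
        | coe a =>
            show (WithBot.map (dstep (n - 1)))^[n] (a : WithBot (Disc (n - 1))) = _
            rw [withBot_map_iterate, dstep_iterate, WithBot.map_coe]
            congr 1
            show (show ZMod (n-1) from a) + (n : ZMod (n - 1)) = dstep (n - 1) a
            rw [cast_eq_one_mod n hn]
            rfl
    · show ¬ (WithBot.map (dstep (n - 1)))^[z₁] (WithBot.some (@id (Disc (n - 1)) (0 : ZMod (n - 1)))) ≤ (WithBot.map (dstep (n - 1)))^[z₂] (WithBot.some (@id (Disc (n - 1)) (0 : ZMod (n - 1))))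
      rw [withBot_map_iterate, withBot_map_iterate, WithBot.coe_le_coe,
        dstep_iterate, dstep_iterate]
      show ¬ ((0 : ZMod (n-1)) + z₁ = (0 : ZMod (n-1)) + z₂)
      simpa using cast_ne_of_interval (n - 1) z₁ z₂ hne h1 h2 h3 h4
  · intro z₁ z₂ hne h1 h2 h3 h4
    refine ⟨WithTop (Disc (m - 1)), inferInstance, WithTop.map (dstep (m - 1)),
      fun _ => ⊤,
      ((show Disc (m - 1) from (0 : ZMod (m - 1))) : WithTop (Disc (m - 1))), ?_, ?_⟩
    · refine ⟨(dstep_mono _).withTop_map, monotone_const, fun y => le_top, ?_, ?_⟩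
      · funext x
        cases x with
        | top =>
            show (WithTop.map (dstep (m - 1)))^[m] ⊤ = _
            rw [Function.iterate_fixed (by simp [WithTop.map_top]) m]
            simp [WithTop.map_top]
        | coe a =>
            show (WithTop.map (dstep (m - 1)))^[m] (a : WithTop (Disc (m - 1))) = _
            rw [withTop_map_iterate, dstep_iterate, WithTop.map_coe]
            congr 1
            show (show ZMod (m-1) from a) + (m : ZMod (m - 1)) = dstep (m - 1) a
            rw [cast_eq_one_mod m hm]
            rfl
      · obtain ⟨n', rfl⟩ : ∃ n', n = n' + 1 := ⟨n - 1, by omega⟩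
        funext x
        rw [Function.iterate_succ_apply]
        exact Function.iterate_fixed rfl n'
    · show ¬ (WithTop.map (dstep (m - 1)))^[z₁] (WithTop.some (@id (Disc (m - 1)) (0 : ZMod (m - 1)))) ≤ (WithTop.map (dstep (m - 1)))^[z₂] (WithTop.some (@id (Disc (m - 1)) (0 : ZMod (m - 1))))
      rw [withTop_map_iterate, withTop_map_iterate, WithTop.coe_le_coe,
        dstep_iterate, dstep_iterate]
      show ¬ ((0 : ZMod (m-1)) + z₁ = (0 : ZMod (m-1)) + z₂)
      simpa using cast_ne_of_interval (m - 1) z₁ z₂ hne h1 h2 h3 h4
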